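/- Let X, Y, Z be the 3×3 real matrices X = E_{12}, Y = E_{23}, Z = E_{13} (elementary matrices with a single entry 1 in the indicated position), which satisfy [X,Y] = Z and [X,Z] = [Y,Z] = 0. Let w_x, w_y, w_z ∈ ℝ with w_y ≠ 0 and set W := w_x X + w_y Y + w_z Z. Then for all x, z ∈ ℝ: exp(−Y) · exp(xX + zZ) · exp(W/w_y) = exp( (x + w_x/w_y) X + (z + x + w_z/w_y + w_x/(2 w_y)) Z ), where exp denotes the matrix exponential. -/

import Mathlib

open Matrix NormedSpace

noncomputable section

/-- The Heisenberg basis matrix `X = E₁₂`. -/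
def Xm : Matrix (Fin 3) (Fin 3) ℝ := Matrix.single 0 1 1

/-- The Heisenberg basis matrix `Y = E₂₃`. -/
def Ym : Matrix (Fin 3) (Fin 3) ℝ := Matrix.single 1 2 1

/-- The Heisenberg basis matrix `Z = E₁₃`. -/
def Zm : Matrix (Fin 3) (Fin 3) ℝ := Matrix.single 0 2 1

lemma exp_of_cube_zero (M : Matrix (Fin 3) (Fin 3) ℝ) (h : M ^ 3 = 0) :
    exp M = 1 + M + (2⁻¹ : ℝ) • M ^ 2 := by
  rw [exp_eq_tsum ℝ]
  show (∑' (n : ℕ), (Nat.factorial n : ℝ)⁻¹ • M ^ n) = _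
  rw [tsum_eq_sum (s := Finset.range 3) (f := fun n => (Nat.factorial n : ℝ)⁻¹ • M ^ n)
    (by
      intro b hb
      simp only [Finset.mem_range, not_lt] at hb
      obtain ⟨k, rfl⟩ := Nat.exists_eq_add_of_le hb
      rw [pow_add, h, zero_mul, smul_zero])]
  rw [Finset.sum_range_succ, Finset.sum_range_succ, Finset.sum_range_succ,
    Finset.sum_range_zero]
  norm_num [Nat.factorial]

lemma Xm_eq : Xm = !![0,1,0;0,0,0;0,0,0] := by
  ext i j; fin_cases i <;> fin_cases j <;>
    simp [Xm, Matrix.single, Matrix.vecHead, Matrix.vecTail]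

lemma Ym_eq : Ym = !![0,0,0;0,0,1;0,0,0] := by
  ext i j; fin_cases i <;> fin_cases j <;>
    simp [Ym, Matrix.single, Matrix.vecHead, Matrix.vecTail]

lemma Zm_eq : Zm = !![0,0,1;0,0,0;0,0,0] := by
  ext i j; fin_cases i <;> fin_cases j <;>
    simp [Zm, Matrix.single, Matrix.vecHead, Matrix.vecTail]

lemma exp_upper (a b c : ℝ) :
    exp !![(0:ℝ),a,b;0,0,c;0,0,0] = !![1,a,b + a*c/2;0,1,c;0,0,1] := by
  rw [exp_of_cube_zero]
  · ext i j
    fin_cases i <;> fin_cases j <;>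
      simp [pow_two, Matrix.mul_apply, Fin.sum_univ_three, Matrix.one_apply,
        Matrix.vecHead, Matrix.vecTail] <;> ring
  · ext i j
    rw [pow_succ, pow_two]
    fin_cases i <;> fin_cases j <;>
      simp [Matrix.mul_apply, Fin.sum_univ_three, Matrix.vecHead, Matrix.vecTail]

set_option maxHeartbeats 1000000 in
/-- Baker–Campbell–Hausdorff computation for the return map.
The Heisenberg basis matrices satisfy `[X,Y]=Z`, `[X,Z]=[Y,Z]=0`, and for `w_y ≠ 0`,
`exp(−Y)·exp(xX+zZ)·exp(W/w_y) = exp((x+w_x/w_y)X + (z+x+w_z/w_y+w_x/(2w_y))Z)` where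
`W = w_x X + w_y Y + w_z Z`. -/
theorem stmt14 (wx wy wz : ℝ) (hwy : wy ≠ 0) (x z : ℝ) :
    Xm * Ym - Ym * Xm = Zm ∧ Xm * Zm - Zm * Xm = 0 ∧ Ym * Zm - Zm * Ym = 0 ∧
    exp (-Ym) * exp (x • Xm + z • Zm) * exp ((1 / wy) • (wx • Xm + wy • Ym + wz • Zm))
      = exp ((x + wx / wy) • Xm + (z + x + wz / wy + wx / (2 * wy)) • Zm) := by
  refine ⟨?_, ?_, ?_, ?_⟩
  · ext i j
    fin_cases i <;> fin_cases j <;>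
      simp [Xm_eq, Ym_eq, Zm_eq, Matrix.mul_apply, Fin.sum_univ_three,
        Matrix.vecHead, Matrix.vecTail]
  · ext i j
    fin_cases i <;> fin_cases j <;>
      simp [Xm_eq, Zm_eq, Matrix.mul_apply, Fin.sum_univ_three,
        Matrix.vecHead, Matrix.vecTail]
  · ext i j
    fin_cases i <;> fin_cases j <;>
      simp [Ym_eq, Zm_eq, Matrix.mul_apply, Fin.sum_univ_three,
        Matrix.vecHead, Matrix.vecTail]
  · have h1 : -Ym = !![(0:ℝ),0,0;0,0,-1;0,0,0] := by
      ext i j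
      fin_cases i <;> fin_cases j <;>
        simp [Ym_eq, Matrix.vecHead, Matrix.vecTail]
    have h2 : x • Xm + z • Zm = !![(0:ℝ),x,z;0,0,0;0,0,0] := by
      ext i j
      fin_cases i <;> fin_cases j <;>
        simp [Xm_eq, Zm_eq, Matrix.vecHead, Matrix.vecTail]
    have h3 : (1 / wy) • (wx • Xm + wy • Ym + wz • Zm)
        = !![(0:ℝ), wx/wy, wz/wy; 0,0,1; 0,0,0] := by
      ext i j
      fin_cases i <;> fin_cases j <;>
        simp [Xm_eq, Ym_eq, Zm_eq, Matrix.vecHead, Matrix.vecTail] <;>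
        field_simp
    have h4 : (x + wx / wy) • Xm + (z + x + wz / wy + wx / (2 * wy)) • Zm
        = !![(0:ℝ), x + wx/wy, z + x + wz/wy + wx/(2*wy); 0,0,0; 0,0,0] := by
      ext i j
      fin_cases i <;> fin_cases j <;>
        simp [Xm_eq, Zm_eq, Matrix.vecHead, Matrix.vecTail]
    rw [h1, h2, h3, h4, exp_upper, exp_upper, exp_upper, exp_upper,
      Matrix.mul_fin_three, Matrix.mul_fin_three]
    ext i j
    fin_cases i <;> fin_cases j <;>
      simp [Matrix.vecHead, Matrix.vecTail] <;>
      field_simp <;> ring
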